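/- The set of points (r_a, r_b, r_c, r_d) in ℝ^4 satisfying the ten inequalities r_a ≥ 0, r_b ≥ 0, r_c ≥ 0, r_d ≥ 0, r_b ≤ 1, r_c ≤ 1, r_a + r_b + r_c ≤ 2, r_b + r_c + r_d ≤ 2, r_a + r_b + r_c + r_d ≤ 3, and r_b + r_c ≤ 1 is equal to the convex hull in ℝ^4 of the 13 points (0,0,0,0), (0,0,0,2), (2,0,0,0), (0,1,0,0), (0,1,0,1), (0,0,1,0), (2,0,0,1), (1,0,0,2), (0,0,1,1), (1,0,1,0), (1,1,0,0), (1,0,1,1), (1,1,0,1). -/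

import Mathlib

open Matrix

lemma sq_decomp (x y : ℝ) (hx0 : 0 ≤ x) (hx1 : x ≤ 1) (hy0 : 0 ≤ y) (hy1 : y ≤ 1) :
    ∃ n : Fin 4 → ℝ, (∀ i, 0 ≤ n i) ∧ n 0 + n 1 + n 2 + n 3 = 1 ∧
      n 1 + n 3 = x ∧ n 2 + n 3 = y := by
  refine ⟨![(1-x)*(1-y), x*(1-y), (1-x)*y, x*y], ?_, by simp <;> ring, by simp <;> ring,
    by simp <;> ring⟩
  intro i
  fin_cases i <;> simp <;> nlinarith

lemma pent_decomp (x y : ℝ) (hx0 : 0 ≤ x) (hy0 : 0 ≤ y) (hx2 : x ≤ 2) (hy2 : y ≤ 2)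
    (hxy : x + y ≤ 3) :
    ∃ l : Fin 5 → ℝ, (∀ i, 0 ≤ l i) ∧ l 0 + l 1 + l 2 + l 3 + l 4 = 1 ∧
      2 * l 1 + 2 * l 3 + l 4 = x ∧ 2 * l 2 + l 3 + 2 * l 4 = y := by
  rcases le_or_gt (x + y) 2 with h | h
  · refine ⟨![1 - (x+y)/2, x/2, y/2, 0, 0], ?_, by simp <;> ring, by simp <;> ring,
      by simp <;> ring⟩
    intro i; fin_cases i <;> simp <;> linarith
  rcases le_or_gt y 1 with hy | hy
  · refine ⟨![0, (1-y) + (2-x)/2, (2-x)/2, x + y - 2, 0], ?_, by simp <;> ring,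
      by simp <;> ring, by simp <;> ring⟩
    intro i; fin_cases i <;> simp <;> linarith
  rcases le_or_gt x 1 with hx | hx
  · refine ⟨![0, (2-y)/2, (1-x) + (2-y)/2, 0, x + y - 2], ?_, by simp <;> ring,
      by simp <;> ring, by simp <;> ring⟩
    intro i; fin_cases i <;> simp <;> linarith
  · refine ⟨![0, (3-x-y)/2, (3-x-y)/2, x - 1, y - 1], ?_, by simp <;> ring,
      by simp <;> ring, by simp <;> ring⟩
    intro i; fin_cases i <;> simp <;> linarith

lemma split_decomp (s a d : ℝ) (hs0 : 0 ≤ s) (hs1 : s ≤ 1)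
    (ha0 : 0 ≤ a) (hd0 : 0 ≤ d) (ha : a ≤ 2 - s) (hd : d ≤ 2 - s) (had : a + d ≤ 3 - s) :
    ∃ a0 d0 a1 d1 : ℝ, 0 ≤ a0 ∧ 0 ≤ d0 ∧ a0 ≤ 2 ∧ d0 ≤ 2 ∧ a0 + d0 ≤ 3 ∧
      0 ≤ a1 ∧ a1 ≤ 1 ∧ 0 ≤ d1 ∧ d1 ≤ 1 ∧
      a = (1 - s) * a0 + s * a1 ∧ d = (1 - s) * d0 + s * d1 := by
  rcases eq_or_lt_of_le hs1 with h1 | h1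
  · exact ⟨0, 0, a, d, le_refl _, le_refl _, by norm_num, by norm_num, by norm_num,
      ha0, by linarith, hd0, by linarith, by rw [h1]; ring, by rw [h1]; ring⟩
  have h1' : (0:ℝ) < 1 - s := by linarith
  refine ⟨(a - s * min a 1) / (1 - s), (d - s * min d 1) / (1 - s), min a 1, min d 1,
    ?_, ?_, ?_, ?_, ?_, le_min ha0 zero_le_one, min_le_right _ _,
    le_min hd0 zero_le_one, min_le_right _ _, by field_simp; ring, by field_simp; ring⟩
  · apply div_nonneg _ (le_of_lt h1')
    rcases min_cases a 1 with ⟨hm, _⟩ | ⟨hm, _⟩ <;> rw [hm] <;> nlinarith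
  · apply div_nonneg _ (le_of_lt h1')
    rcases min_cases d 1 with ⟨hm, _⟩ | ⟨hm, _⟩ <;> rw [hm] <;> nlinarith
  · rw [div_le_iff₀ h1']
    rcases min_cases a 1 with ⟨hm, hc⟩ | ⟨hm, hc⟩ <;> rw [hm] <;> nlinarith
  · rw [div_le_iff₀ h1']
    rcases min_cases d 1 with ⟨hm, hc⟩ | ⟨hm, hc⟩ <;> rw [hm] <;> nlinarith
  · rw [← add_div, div_le_iff₀ h1']
    rcases min_cases a 1 with ⟨hma, hca⟩ | ⟨hma, hca⟩ <;>
      rcases min_cases d 1 with ⟨hmd, hcd⟩ | ⟨hmd, hcd⟩ <;> rw [hma, hmd] <;> nlinarith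
theorem generalized_butterfly_routing_rate_region :
    {r : Fin 4 → ℝ | 0 ≤ r 0 ∧ 0 ≤ r 1 ∧ 0 ≤ r 2 ∧ 0 ≤ r 3 ∧
      r 1 ≤ 1 ∧ r 2 ≤ 1 ∧ r 0 + r 1 + r 2 ≤ 2 ∧ r 1 + r 2 + r 3 ≤ 2 ∧
      r 0 + r 1 + r 2 + r 3 ≤ 3 ∧ r 1 + r 2 ≤ 1} =
    convexHull ℝ {![0,0,0,0], ![0,0,0,2], ![2,0,0,0], ![0,1,0,0], ![0,1,0,1],
      ![0,0,1,0], ![2,0,0,1], ![1,0,0,2], ![0,0,1,1], ![1,0,1,0], ![1,1,0,0],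
      ![1,0,1,1], ![1,1,0,1]} := by
  apply Set.Subset.antisymm
  · intro r hr
    obtain ⟨h0, h1, h2, h3, hb1, hc1, h7, h8, h9, hbc⟩ := hr
    obtain ⟨a0, d0, a1, d1, ha00, hd00, ha02, hd02, had0, ha10, ha11, hd10, hd11, heqa, heqd⟩ :=
      split_decomp (r 1 + r 2) (r 0) (r 3) (by linarith) hbc h0 h3 (by linarith) (by linarith)
        (by linarith)
    obtain ⟨l, hl, hls, hlx, hly⟩ := pent_decomp a0 d0 ha00 hd00 ha02 hd02 had0
    obtain ⟨n, hn, hns, hnx, hny⟩ := sq_decomp a1 d1 ha10 ha11 hd10 hd11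
    set s := r 1 + r 2 with hsdef
    set w : Fin 13 → ℝ := ![(1-s)*l 0, (1-s)*l 2, (1-s)*l 1, r 1*n 0, r 1*n 2, r 2*n 0,
      (1-s)*l 3, (1-s)*l 4, r 2*n 2, r 2*n 1, r 1*n 1, r 2*n 3, r 1*n 3] with hwdef
    set z : Fin 13 → (Fin 4 → ℝ) := ![![0,0,0,0], ![0,0,0,2], ![2,0,0,0], ![0,1,0,0],
      ![0,1,0,1], ![0,0,1,0], ![2,0,0,1], ![1,0,0,2], ![0,0,1,1], ![1,0,1,0], ![1,1,0,0],
      ![1,0,1,1], ![1,1,0,1]] with hzdef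
    have hs0 : (0:ℝ) ≤ s := by simp only [hsdef]; linarith
    have hs1 : s ≤ 1 := hbc
    have hw : ∀ i, 0 ≤ w i := by
      simp only [hwdef, Fin.forall_fin_succ, Matrix.cons_val_zero, Matrix.cons_val_succ,
        IsEmpty.forall_iff, and_true]
      refine ⟨?_, ?_, ?_, ?_, ?_, ?_, ?_, ?_, ?_, ?_, ?_, ?_, ?_⟩ <;>
        exact mul_nonneg (by linarith) (by first | apply hl | apply hn)
    have hwsum : ∑ i, w i = 1 := by
      simp only [hwdef, Fin.sum_univ_succ, Fin.sum_univ_zero, Matrix.cons_val_zero,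
        Matrix.cons_val_succ, add_zero]
      linear_combination (1-s)*hls + s*hns
    have hzmem : ∀ i : Fin 13, z i ∈ ({![0,0,0,0], ![0,0,0,2], ![2,0,0,0], ![0,1,0,0],
        ![0,1,0,1], ![0,0,1,0], ![2,0,0,1], ![1,0,0,2], ![0,0,1,1], ![1,0,1,0], ![1,1,0,0],
        ![1,0,1,1], ![1,1,0,1]} : Set (Fin 4 → ℝ)) := by
      simp only [hzdef, Fin.forall_fin_succ, Matrix.cons_val_zero, Matrix.cons_val_succ,
        IsEmpty.forall_iff, and_true, Set.mem_insert_iff, Set.mem_singleton_iff]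
      norm_num
    have hmem := Finset.centerMass_mem_convexHull Finset.univ (fun i _ => hw i)
      (by rw [hwsum]; norm_num) (fun i _ => hzmem i)
    have key : ∀ j, (∑ i, w i • z i) j = ![r 0, r 1, r 2, r 3] j := by
      simp only [hwdef, hzdef, Finset.sum_apply, Pi.smul_apply, smul_eq_mul,
        Fin.sum_univ_succ, Fin.sum_univ_zero, Fin.forall_fin_succ, Matrix.cons_val_zero,
        Matrix.cons_val_succ, IsEmpty.forall_iff, and_true, add_zero, mul_zero, mul_one]
      refine ⟨?_, ?_, ?_, ?_⟩
      · linear_combination (1-s)*hlx + s*hnx - heqa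
      · linear_combination (r 1)*hns
      · linear_combination (r 2)*hns
      · linear_combination (1-s)*hly + s*hny - heqd
    have hrr : Finset.univ.centerMass w z = r := by
      rw [Finset.centerMass, hwsum, inv_one, one_smul]
      funext j
      rw [key j]
      rcases j with ⟨jv, hj⟩
      interval_cases jv <;> rfl
    rw [← hrr]
    exact hmem
  · apply convexHull_min
    · intro x hx
      simp only [Set.mem_insert_iff, Set.mem_singleton_iff] at hx
      rcases hx with rfl|rfl|rfl|rfl|rfl|rfl|rfl|rfl|rfl|rfl|rfl|rfl|rfl <;>
        simp [Set.mem_setOf_eq] <;> norm_num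
    · intro x hx y hy α β hα hβ hαβ
      obtain ⟨hx0, hx1, hx2, hx3, hx4, hx5, hx6, hx7, hx8, hx9⟩ := hx
      obtain ⟨hy0, hy1, hy2, hy3, hy4, hy5, hy6, hy7, hy8, hy9⟩ := hy
      have e0 := mul_nonneg hα hx0; have f0 := mul_nonneg hβ hy0
      have e1 := mul_nonneg hα hx1; have f1 := mul_nonneg hβ hy1
      have e2 := mul_nonneg hα hx2; have f2 := mul_nonneg hβ hy2
      have e3 := mul_nonneg hα hx3; have f3 := mul_nonneg hβ hy3
      have e4 := mul_le_mul_of_nonneg_left hx4 hα; have f4 := mul_le_mul_of_nonneg_left hy4 hβ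
      have e5 := mul_le_mul_of_nonneg_left hx5 hα; have f5 := mul_le_mul_of_nonneg_left hy5 hβ
      have e6 := mul_le_mul_of_nonneg_left hx6 hα; have f6 := mul_le_mul_of_nonneg_left hy6 hβ
      have e7 := mul_le_mul_of_nonneg_left hx7 hα; have f7 := mul_le_mul_of_nonneg_left hy7 hβ
      have e8 := mul_le_mul_of_nonneg_left hx8 hα; have f8 := mul_le_mul_of_nonneg_left hy8 hβ
      have e9 := mul_le_mul_of_nonneg_left hx9 hα; have f9 := mul_le_mul_of_nonneg_left hy9 hβ
      simp only [Set.mem_setOf_eq, Pi.add_apply, Pi.smul_apply, smul_eq_mul]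
      refine ⟨by linarith, by linarith, by linarith, by linarith, by linarith, by linarith,
        by linarith, by linarith, by linarith, by linarith⟩
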